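/- Fix n ≥ 1. If f ∈ F_X leans right at n, and σ is τ_i or τ_i^{-1} for some i ≥ 1 with σ ≠ τ_n^{-1}, then σ(f) also leans right at n. -/

import Mathlib

/-- The automorphism `τ_i` (as an endomorphism of the free group `F_X` on
`x_0, x_1, …`, given by its values on the generators, for `i ≥ 1`):
`x_i ↦ x_{i+1} · x_i⁻¹ · x_{i-1}` and `x_j ↦ x_j` for `j ≠ i`. -/
def tauHom (i : ℕ) : FreeGroup ℕ →* FreeGroup ℕ :=
  FreeGroup.lift fun j =>
    if j = i then FreeGroup.of (i + 1) * (FreeGroup.of i)⁻¹ * FreeGroup.of (i - 1)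
    else FreeGroup.of j

/-- The inverse automorphism `τ_i⁻¹`: `x_i ↦ x_{i-1} · x_i⁻¹ · x_{i+1}` and
`x_j ↦ x_j` for `j ≠ i`. -/
def tauInvHom (i : ℕ) : FreeGroup ℕ →* FreeGroup ℕ :=
  FreeGroup.lift fun j =>
    if j = i then FreeGroup.of (i - 1) * (FreeGroup.of i)⁻¹ * FreeGroup.of (i + 1)
    else FreeGroup.of j

/-- The reduced word of `f` leans right at `n`: it begins either with a letter `x_m`
(positively) for some `m > n`, or with `x_n` (positively) followed by `x_m⁻¹` for
some `m > n`. -/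
def LeansRight (n : ℕ) (f : FreeGroup ℕ) : Prop :=
  (∃ m : ℕ, n < m ∧ f.toWord.head? = some (m, true)) ∨
  (∃ m : ℕ, n < m ∧ f.toWord.take 2 = [(n, true), (m, false)])


namespace TauAux

open FreeGroup List

/-- no-cancellation relation between adjacent letters -/
def R (x y : ℕ × Bool) : Prop := ¬(x.1 = y.1 ∧ x.2 = !y.2)

lemma chain'_iff_reduce {w : List (ℕ × Bool)} :
    List.Chain' R w ↔ FreeGroup.reduce w = w := by
  induction w with
  | nil => simp; exact List.isChain_nil
  | cons x t ih =>
    constructor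
    · intro h
      have ht : FreeGroup.reduce t = t := ih.1 h.tail
      rw [FreeGroup.reduce.cons, ht]
      cases t with
      | nil => rfl
      | cons hd tl =>
        have hR : R x hd := (List.isChain_cons_cons.1 h).1
        simp only [R] at hR
        simp [if_neg hR]
    · intro h
      have hsub : (FreeGroup.reduce t).length ≤ t.length :=
        (FreeGroup.Red.sublist (FreeGroup.reduce.red)).length_le
      rw [FreeGroup.reduce.cons] at h
      cases hrt : FreeGroup.reduce t with
      | nil =>
        rw [hrt] at h
        have h' : [x] = x :: t := h
        have : t = [] := by injection h'.symm
        subst this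
        exact List.isChain_singleton x
      | cons hd tl =>
        rw [hrt] at h
        have h' : (if x.1 = hd.1 ∧ x.2 = !hd.2 then tl else x :: hd :: tl) = x :: t := h
        by_cases hc : x.1 = hd.1 ∧ x.2 = !hd.2
        · rw [if_pos hc] at h'
          have h1 := congrArg List.length h'
          have h2 := congrArg List.length hrt
          simp at h1 h2
          omega
        · rw [if_neg hc] at h'
          replace h := h'
          have ht : t = hd :: tl := by
            injection h with _ h2
            exact h2.symm
          have hred : FreeGroup.reduce t = t := by rw [hrt, ht]
          subst ht
          exact List.isChain_cons_cons.2 ⟨(hc : R x hd), ih.2 hred⟩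

lemma chain'_toWord (f : FreeGroup ℕ) : List.Chain' R f.toWord :=
  chain'_iff_reduce.2 (FreeGroup.reduce_toWord f)


/-- image of a letter under the substitution -/
def blk (i p q : ℕ) (l : ℕ × Bool) : List (ℕ × Bool) :=
  if l.1 = i then
    (if l.2 then [(p, true), (i, false), (q, true)] else [(q, false), (i, true), (p, false)])
  else [l]

/-- concatenate with at most one cancellation at the junction -/
def glue (a b : List (ℕ × Bool)) : List (ℕ × Bool) :=
  match b with
  | [] => a
  | y :: b' => if a.getLast? = some (y.1, !y.2) then a.dropLast ++ b' else a ++ b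

/-- image of a word under the substitution, with junction cancellations -/
def app (i p q : ℕ) : List (ℕ × Bool) → List (ℕ × Bool)
  | [] => []
  | l :: t => glue (blk i p q l) (app i p q t)

lemma red_glue (a b : List (ℕ × Bool)) : FreeGroup.Red (a ++ b) (glue a b) := by
  cases b with
  | nil => rw [glue, List.append_nil]
  | cons y b' =>
    by_cases h : a.getLast? = some (y.1, !y.2)
    · rw [glue]
      rw [if_pos h]
      have ha : a.dropLast ++ [(y.1, !y.2)] = a := by
        conv_rhs => rw [← List.dropLast_append_getLast? _ h]
      have : a ++ y :: b' = a.dropLast ++ (y.1, !y.2) :: (y.1, y.2) :: b' := by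
        rw [← ha]
        simp
      rw [this]
      exact Relation.ReflTransGen.single (FreeGroup.Red.Step.not_rev)
    · rw [glue, if_neg h]

lemma mk_glue (a b : List (ℕ × Bool)) : FreeGroup.mk (glue a b) = FreeGroup.mk (a ++ b) :=
  (FreeGroup.reduce.exact (FreeGroup.reduce.eq_of_red (red_glue a b))).symm

lemma sigma_mk_eq_mk_app (i p q : ℕ) (σ : FreeGroup ℕ →* FreeGroup ℕ)
    (hblk : ∀ l : ℕ × Bool, σ (FreeGroup.mk [l]) = FreeGroup.mk (blk i p q l)) :
    ∀ w : List (ℕ × Bool), σ (FreeGroup.mk w) = FreeGroup.mk (app i p q w) := by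
  intro w
  induction w with
  | nil =>
    show σ (FreeGroup.mk []) = FreeGroup.mk []
    have : FreeGroup.mk ([] : List (ℕ × Bool)) = 1 := rfl
    rw [this]
    exact σ.map_one
  | cons l t ih =>
    have : FreeGroup.mk (l :: t) = FreeGroup.mk [l] * FreeGroup.mk t := by
      rw [FreeGroup.mul_mk]
      rfl
    rw [this, σ.map_mul, hblk, ih, FreeGroup.mul_mk, app, mk_glue]


@[simp] lemma glue_nil (a : List (ℕ × Bool)) : glue a [] = a := rfl

lemma glue_cons (a : List (ℕ × Bool)) (y : ℕ × Bool) (b' : List (ℕ × Bool)) :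
    glue a (y :: b') =
      if a.getLast? = some (y.1, !y.2) then a.dropLast ++ b' else a ++ (y :: b') := rfl

lemma app_nil (i p q : ℕ) : app i p q [] = [] := rfl

lemma app_cons (i p q : ℕ) (l : ℕ × Bool) (t : List (ℕ × Bool)) :
    app i p q (l :: t) = glue (blk i p q l) (app i p q t) := rfl

/-- head specification for `app` -/
def HS (i p q : ℕ) (w a : List (ℕ × Bool)) : Prop :=
  (w = [] ∧ a = [])
  ∨ (∃ t r, w = (i,true) :: t ∧ a = (p,true) :: (i,false) :: r)
  ∨ (∃ t r, w = (i,false) :: t ∧ a = (q,false) :: (i,true) :: r)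
  ∨ (∃ j b t, w = (j,b) :: t ∧ j ≠ i ∧ a = (j,b) :: app i p q t)
  ∨ (∃ t r, w = (p,false) :: (i,true) :: t ∧ a = (i,false) :: r)
  ∨ (∃ t r, w = (q,true) :: (i,false) :: t ∧ a = (i,true) :: r)


lemma R_of_ne {x y : ℕ} {bx by' : Bool} (h : x ≠ y) : R (x,bx) (y,by') :=
  fun hh => h hh.1

lemma R_same_sign {x y : ℕ} {c : Bool} : R (x,c) (y,c) := by
  rintro ⟨-, h⟩
  cases c <;> simp at h

lemma head_R {x : ℕ × Bool} {l : List (ℕ × Bool)}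
    (h : l.head? ≠ some (x.1, !x.2)) : ∀ y ∈ l.head?, R x y := by
  intro y hy hxy
  apply h
  simp only [Option.mem_def] at hy
  rw [hy]
  obtain ⟨h1, h2⟩ := hxy
  obtain ⟨y1, y2⟩ := y
  simp only [Option.some.injEq, Prod.mk.injEq]
  exact ⟨h1.symm, by rw [h2, Bool.not_not]⟩

lemma chainT {i p q : ℕ} (hpi : p ≠ i) (hqi : q ≠ i) :
    List.Chain' R [((p:ℕ),true),(i,false),(q,true)] := by
  refine List.isChain_cons_cons.2 ⟨?_, List.isChain_cons_cons.2 ⟨?_, List.isChain_singleton _⟩⟩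
  · rintro ⟨h1, -⟩; exact hpi h1
  · rintro ⟨h1, -⟩; exact hqi h1.symm

lemma chainF {i p q : ℕ} (hpi : p ≠ i) (hqi : q ≠ i) :
    List.Chain' R [((q:ℕ),false),(i,true),(p,false)] := by
  refine List.isChain_cons_cons.2 ⟨?_, List.isChain_cons_cons.2 ⟨?_, List.isChain_singleton _⟩⟩
  · rintro ⟨h1, -⟩; exact hqi h1
  · rintro ⟨h1, -⟩; exact hpi h1.symm

lemma head_ne_true {i p q : ℕ} {t' : List (ℕ × Bool)} (hpi : p ≠ i)
    (hch : List.Chain' R (((q:ℕ),false) :: t'))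
    (hs' : HS i p q t' (app i p q t')) : (app i p q t').head? ≠ some (i,true) := by
  rcases hs' with ⟨-, ha⟩ | ⟨t2, r, ht, ha⟩ | ⟨t2, r, ht, ha⟩ | ⟨j2, b2, t2, ht, hj2, ha⟩ |
    ⟨t2, r, ht, ha⟩ | ⟨t2, r, ht, ha⟩ <;> rw [ha] <;> intro hcon
  · simp at hcon
  · simp only [List.head?_cons, Option.some.injEq, Prod.mk.injEq] at hcon
    exact hpi hcon.1
  · simp at hcon
  · simp only [List.head?_cons, Option.some.injEq, Prod.mk.injEq] at hcon
    exact hj2 hcon.1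
  · simp at hcon
  · rw [ht] at hch
    exact (List.isChain_cons_cons.1 hch).1 ⟨rfl, rfl⟩

lemma head_ne_false {i p q : ℕ} {t' : List (ℕ × Bool)} (hqi : q ≠ i)
    (hch : List.Chain' R (((p:ℕ),true) :: t'))
    (hs' : HS i p q t' (app i p q t')) : (app i p q t').head? ≠ some (i,false) := by
  rcases hs' with ⟨-, ha⟩ | ⟨t2, r, ht, ha⟩ | ⟨t2, r, ht, ha⟩ | ⟨j2, b2, t2, ht, hj2, ha⟩ |
    ⟨t2, r, ht, ha⟩ | ⟨t2, r, ht, ha⟩ <;> rw [ha] <;> intro hcon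
  · simp at hcon
  · simp at hcon
  · simp only [List.head?_cons, Option.some.injEq, Prod.mk.injEq] at hcon
    exact hqi hcon.1
  · simp only [List.head?_cons, Option.some.injEq, Prod.mk.injEq] at hcon
    exact hj2 hcon.1
  · rw [ht] at hch
    exact (List.isChain_cons_cons.1 hch).1 ⟨rfl, rfl⟩
  · simp at hcon


lemma master (i p q : ℕ) (hpi : p ≠ i) (hqi : q ≠ i) (hpq : p ≠ q) :
    ∀ (N : ℕ) (w : List (ℕ × Bool)), w.length ≤ N → List.Chain' R w →
      List.Chain' R (app i p q w) ∧ HS i p q w (app i p q w) := by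
  intro N
  induction N with
  | zero =>
    intro w hw _
    have hw0 : w = [] := List.length_eq_zero_iff.1 (Nat.le_zero.1 hw)
    subst hw0
    exact ⟨List.isChain_nil, Or.inl ⟨rfl, rfl⟩⟩
  | succ N ih =>
    intro w hw hch
    match w with
    | [] => exact ⟨List.isChain_nil, Or.inl ⟨rfl, rfl⟩⟩
    | (j, b) :: t =>
      have hlt : t.length ≤ N := by
        simp only [List.length_cons] at hw; omega
      obtain ⟨chat, hst⟩ := ih t hlt hch.tail
      by_cases hji : j = i
      · subst hji
        cases b
        · -- letter (j, false)
          have hblk : blk j p q (j, false) = [(q,false),(j,true),(p,false)] := by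
            simp [blk]
          rw [app_cons, hblk]
          rcases hst with ⟨ht0, ha0⟩ | ⟨t', r, ht0, ha0⟩ | ⟨t', r, ht0, ha0⟩ |
            ⟨j', b', t', ht0, hj'i, ha0⟩ | ⟨t', r, ht0, ha0⟩ | ⟨t', r, ht0, ha0⟩
          · rw [ha0, glue_nil]
            exact ⟨chainF hpi hqi, Or.inr (Or.inr (Or.inl ⟨t, [(p,false)], rfl, rfl⟩))⟩
          · exfalso
            rw [ht0] at hch
            exact (List.isChain_cons_cons.1 hch).1 ⟨rfl, rfl⟩
          · rw [ha0, glue_cons, if_neg (by simp)]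
            constructor
            · simp only [List.cons_append, List.nil_append]
              refine List.isChain_cons_cons.2 ⟨R_of_ne hqi, List.isChain_cons_cons.2
                ⟨R_of_ne (fun h => hpi h.symm), List.isChain_cons_cons.2 ⟨R_same_sign, ?_⟩⟩⟩
              rw [← ha0]; exact chat
            · exact Or.inr (Or.inr (Or.inl
                ⟨t, (p,false)::(q,false)::(j,true)::r, rfl, by simp⟩))
          · by_cases hc : (j', b') = (p, true)
            · have hlt' : t'.length ≤ N := by
                rw [ht0] at hlt; simp only [List.length_cons] at hlt; omega
              have h1 : List.Chain' R ((p,true) :: t') := by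
                have h2 := hch.tail; rw [ht0, hc] at h2; exact h2
              obtain ⟨chat', hst'⟩ := ih t' hlt' h1.tail
              rw [ha0, glue_cons, hc, if_pos (by simp)]
              have hres : ([(q,false),(j,true),(p,false)] : List (ℕ × Bool)).dropLast
                  ++ app j p q t' = (q,false) :: (j,true) :: app j p q t' := by simp
              rw [hres]
              have hne : (app j p q t').head? ≠ some (j, false) :=
                head_ne_false hqi h1 hst'
              constructor
              · refine List.isChain_cons_cons.2 ⟨R_of_ne hqi, List.isChain_cons.2 ⟨?_, chat'⟩⟩
                exact head_R (by simpa using hne)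
              · exact Or.inr (Or.inr (Or.inl ⟨t, app j p q t', rfl, rfl⟩))
            · rw [ha0, glue_cons, if_neg (by
                intro hh
                simp only [List.getLast?_cons_cons, List.getLast?_singleton,
                  Option.some.injEq, Prod.mk.injEq] at hh
                obtain ⟨e1, e2⟩ := hh
                apply hc
                cases b'
                · simp at e2
                · rw [e1])]
              constructor
              · simp only [List.cons_append, List.nil_append]
                refine List.isChain_cons_cons.2 ⟨R_of_ne hqi, List.isChain_cons_cons.2
                  ⟨R_of_ne (fun h => hpi h.symm), List.isChain_cons_cons.2 ⟨?_, ?_⟩⟩⟩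
                · rintro ⟨e1, e2⟩
                  replace e1 : p = j' := e1
                  replace e2 : false = !b' := e2
                  apply hc
                  cases b'
                  · simp at e2
                  · rw [e1]
                · rw [← ha0]; exact chat
              · exact Or.inr (Or.inr (Or.inl
                  ⟨t, (p,false)::(j',b')::app j p q t', rfl, by simp⟩))
          · rw [ha0, glue_cons, if_neg (by simp)]
            constructor
            · simp only [List.cons_append, List.nil_append]
              refine List.isChain_cons_cons.2 ⟨R_of_ne hqi, List.isChain_cons_cons.2
                ⟨R_of_ne (fun h => hpi h.symm), List.isChain_cons_cons.2 ⟨R_same_sign, ?_⟩⟩⟩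
              rw [← ha0]; exact chat
            · exact Or.inr (Or.inr (Or.inl ⟨t, (p,false)::(j,false)::r, rfl, by simp⟩))
          · rw [ha0, glue_cons, if_neg (by simp [hpi])]
            constructor
            · simp only [List.cons_append, List.nil_append]
              refine List.isChain_cons_cons.2 ⟨R_of_ne hqi, List.isChain_cons_cons.2
                ⟨R_of_ne (fun h => hpi h.symm), List.isChain_cons_cons.2 ⟨R_of_ne hpi, ?_⟩⟩⟩
              rw [← ha0]; exact chat
            · exact Or.inr (Or.inr (Or.inl ⟨t, (p,false)::(j,true)::r, rfl, by simp⟩))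
        · -- letter (j, true)
          have hblk : blk j p q (j, true) = [(p,true),(j,false),(q,true)] := by
            simp [blk]
          rw [app_cons, hblk]
          rcases hst with ⟨ht0, ha0⟩ | ⟨t', r, ht0, ha0⟩ | ⟨t', r, ht0, ha0⟩ |
            ⟨j', b', t', ht0, hj'i, ha0⟩ | ⟨t', r, ht0, ha0⟩ | ⟨t', r, ht0, ha0⟩
          · rw [ha0, glue_nil]
            exact ⟨chainT hpi hqi, Or.inr (Or.inl ⟨t, [(q,true)], rfl, rfl⟩)⟩
          · rw [ha0, glue_cons, if_neg (by simp)]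
            constructor
            · simp only [List.cons_append, List.nil_append]
              refine List.isChain_cons_cons.2 ⟨R_of_ne hpi, List.isChain_cons_cons.2
                ⟨R_of_ne (fun h => hqi h.symm), List.isChain_cons_cons.2 ⟨R_same_sign, ?_⟩⟩⟩
              rw [← ha0]; exact chat
            · exact Or.inr (Or.inl ⟨t, (q,true)::(p,true)::(j,false)::r, rfl, by simp⟩)
          · exfalso
            rw [ht0] at hch
            exact (List.isChain_cons_cons.1 hch).1 ⟨rfl, rfl⟩
          · by_cases hc : (j', b') = (q, false)
            · have hlt' : t'.length ≤ N := by
                rw [ht0] at hlt; simp only [List.length_cons] at hlt; omega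
              have h1 : List.Chain' R ((q,false) :: t') := by
                have h2 := hch.tail; rw [ht0, hc] at h2; exact h2
              obtain ⟨chat', hst'⟩ := ih t' hlt' h1.tail
              rw [ha0, glue_cons, hc, if_pos (by simp)]
              have hres : ([(p,true),(j,false),(q,true)] : List (ℕ × Bool)).dropLast
                  ++ app j p q t' = (p,true) :: (j,false) :: app j p q t' := by simp
              rw [hres]
              have hne : (app j p q t').head? ≠ some (j, true) :=
                head_ne_true hpi h1 hst'
              constructor
              · refine List.isChain_cons_cons.2 ⟨R_of_ne hpi, List.isChain_cons.2 ⟨?_, chat'⟩⟩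
                exact head_R (by simpa using hne)
              · exact Or.inr (Or.inl ⟨t, app j p q t', rfl, rfl⟩)
            · rw [ha0, glue_cons, if_neg (by
                intro hh
                simp only [List.getLast?_cons_cons, List.getLast?_singleton,
                  Option.some.injEq, Prod.mk.injEq] at hh
                obtain ⟨e1, e2⟩ := hh
                apply hc
                cases b'
                · rw [e1]
                · simp at e2)]
              constructor
              · simp only [List.cons_append, List.nil_append]
                refine List.isChain_cons_cons.2 ⟨R_of_ne hpi, List.isChain_cons_cons.2
                  ⟨R_of_ne (fun h => hqi h.symm), List.isChain_cons_cons.2 ⟨?_, ?_⟩⟩⟩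
                · rintro ⟨e1, e2⟩
                  replace e1 : q = j' := e1
                  replace e2 : true = !b' := e2
                  apply hc
                  cases b'
                  · rw [e1]
                  · simp at e2
                · rw [← ha0]; exact chat
              · exact Or.inr (Or.inl ⟨t, (q,true)::(j',b')::app j p q t', rfl, by simp⟩)
          · rw [ha0, glue_cons, if_neg (by simp [hqi])]
            constructor
            · simp only [List.cons_append, List.nil_append]
              refine List.isChain_cons_cons.2 ⟨R_of_ne hpi, List.isChain_cons_cons.2
                ⟨R_of_ne (fun h => hqi h.symm), List.isChain_cons_cons.2 ⟨R_of_ne hqi, ?_⟩⟩⟩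
              rw [← ha0]; exact chat
            · exact Or.inr (Or.inl ⟨t, (q,true)::(j,false)::r, rfl, by simp⟩)
          · rw [ha0, glue_cons, if_neg (by simp)]
            constructor
            · simp only [List.cons_append, List.nil_append]
              refine List.isChain_cons_cons.2 ⟨R_of_ne hpi, List.isChain_cons_cons.2
                ⟨R_of_ne (fun h => hqi h.symm), List.isChain_cons_cons.2 ⟨R_same_sign, ?_⟩⟩⟩
              rw [← ha0]; exact chat
            · exact Or.inr (Or.inl ⟨t, (q,true)::(j,true)::r, rfl, by simp⟩)
      · -- j ≠ i
        have hblk : blk i p q (j, b) = [(j, b)] := by simp [blk, hji]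
        rw [app_cons, hblk]
        rcases hst with ⟨ht0, ha0⟩ | ⟨t', r, ht0, ha0⟩ | ⟨t', r, ht0, ha0⟩ |
          ⟨j', b', t', ht0, hj'i, ha0⟩ | ⟨t', r, ht0, ha0⟩ | ⟨t', r, ht0, ha0⟩
        · rw [ha0, glue_nil]
          refine ⟨List.isChain_singleton _, Or.inr (Or.inr (Or.inr (Or.inl
            ⟨j, b, t, rfl, hji, by rw [ha0]⟩)))⟩
        · by_cases hc : (j, b) = (p, false)
          · rw [ha0, glue_cons, if_pos (by simp [hc])]
            have hres : ([(j,b)] : List (ℕ × Bool)).dropLast ++ ((i,false) :: r)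
                = (i,false) :: r := by simp
            rw [hres]
            constructor
            · have h2 := chat; rw [ha0] at h2; exact h2.tail
            · refine Or.inr (Or.inr (Or.inr (Or.inr (Or.inl ⟨t', r, ?_, rfl⟩))))
              rw [hc, ht0]
          · rw [ha0, glue_cons, if_neg (by
              intro hh
              simp only [List.getLast?_singleton, Option.some.injEq, Prod.mk.injEq] at hh
              obtain ⟨e1, e2⟩ := hh
              apply hc
              cases b
              · rw [e1]
              · simp at e2)]
            constructor
            · simp only [List.cons_append, List.nil_append]
              refine List.isChain_cons_cons.2 ⟨?_, by rw [← ha0]; exact chat⟩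
              rintro ⟨e1, e2⟩
              replace e1 : j = p := e1
              replace e2 : b = !true := e2
              apply hc
              cases b
              · rw [← e1]
              · simp at e2
            · exact Or.inr (Or.inr (Or.inr (Or.inl ⟨j, b, t, rfl, hji, by rw [ha0]; simp⟩)))
        · by_cases hc : (j, b) = (q, true)
          · rw [ha0, glue_cons, if_pos (by simp [hc])]
            have hres : ([(j,b)] : List (ℕ × Bool)).dropLast ++ ((i,true) :: r)
                = (i,true) :: r := by simp
            rw [hres]
            constructor
            · have h2 := chat; rw [ha0] at h2; exact h2.tail
            · refine Or.inr (Or.inr (Or.inr (Or.inr (Or.inr ⟨t', r, ?_, rfl⟩))))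
              rw [hc, ht0]
          · rw [ha0, glue_cons, if_neg (by
              intro hh
              simp only [List.getLast?_singleton, Option.some.injEq, Prod.mk.injEq] at hh
              obtain ⟨e1, e2⟩ := hh
              apply hc
              cases b
              · simp at e2
              · rw [e1])]
            constructor
            · simp only [List.cons_append, List.nil_append]
              refine List.isChain_cons_cons.2 ⟨?_, by rw [← ha0]; exact chat⟩
              rintro ⟨e1, e2⟩
              replace e1 : j = q := e1
              replace e2 : b = !false := e2
              apply hc
              cases b
              · simp at e2
              · rw [← e1]
            · exact Or.inr (Or.inr (Or.inr (Or.inl ⟨j, b, t, rfl, hji, by rw [ha0]; simp⟩)))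
        · have hrel : R (j,b) (j',b') := by
            rw [ht0] at hch
            exact (List.isChain_cons_cons.1 hch).1
          rw [ha0, glue_cons, if_neg (by
            intro hh
            simp only [List.getLast?_singleton, Option.some.injEq, Prod.mk.injEq] at hh
            exact hrel ⟨hh.1, hh.2⟩)]
          constructor
          · simp only [List.cons_append, List.nil_append]
            exact List.isChain_cons_cons.2 ⟨hrel, by rw [← ha0]; exact chat⟩
          · exact Or.inr (Or.inr (Or.inr (Or.inl ⟨j, b, t, rfl, hji, by rw [ha0]; simp⟩)))
        · rw [ha0, glue_cons, if_neg (by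
            intro hh
            simp only [List.getLast?_singleton, Option.some.injEq, Prod.mk.injEq] at hh
            exact hji hh.1)]
          constructor
          · simp only [List.cons_append, List.nil_append]
            exact List.isChain_cons_cons.2 ⟨R_of_ne hji, by rw [← ha0]; exact chat⟩
          · exact Or.inr (Or.inr (Or.inr (Or.inl ⟨j, b, t, rfl, hji, by rw [ha0]; simp⟩)))
        · rw [ha0, glue_cons, if_neg (by
            intro hh
            simp only [List.getLast?_singleton, Option.some.injEq, Prod.mk.injEq] at hh
            exact hji hh.1)]
          constructor
          · simp only [List.cons_append, List.nil_append]
            exact List.isChain_cons_cons.2 ⟨R_of_ne hji, by rw [← ha0]; exact chat⟩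
          · exact Or.inr (Or.inr (Or.inr (Or.inl ⟨j, b, t, rfl, hji, by rw [ha0]; simp⟩)))


lemma mk_single_true (j : ℕ) : FreeGroup.mk [(j, true)] = FreeGroup.of j := rfl

lemma mk_single_false (j : ℕ) : FreeGroup.mk [(j, false)] = (FreeGroup.of j)⁻¹ := by
  rw [← mk_single_true, FreeGroup.inv_mk]
  simp [FreeGroup.invRev]

lemma hblk_gen (i p q : ℕ) (g : ℕ → FreeGroup ℕ)
    (hgi : g i = FreeGroup.mk [(p,true),(i,false),(q,true)])
    (hgj : ∀ j, j ≠ i → g j = FreeGroup.of j) :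
    ∀ l : ℕ × Bool, (FreeGroup.lift g) (FreeGroup.mk [l]) = FreeGroup.mk (blk i p q l) := by
  rintro ⟨j, b⟩
  by_cases hj : j = i
  · subst hj
    cases b
    · rw [mk_single_false, (FreeGroup.lift g).map_inv, FreeGroup.lift_apply_of, hgi, FreeGroup.inv_mk]
      simp [FreeGroup.invRev, blk]
    · rw [mk_single_true, FreeGroup.lift_apply_of, hgi]
      simp [blk]
  · cases b
    · rw [mk_single_false, (FreeGroup.lift g).map_inv, FreeGroup.lift_apply_of, hgj j hj, ← mk_single_false]
      simp [blk, hj]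
    · rw [mk_single_true, FreeGroup.lift_apply_of, hgj j hj]
      simp [blk, hj, mk_single_true]


lemma toWord_image (i p q : ℕ) (hpi : p ≠ i) (hqi : q ≠ i) (hpq : p ≠ q)
    (σ : FreeGroup ℕ →* FreeGroup ℕ)
    (hblk : ∀ l : ℕ × Bool, σ (FreeGroup.mk [l]) = FreeGroup.mk (blk i p q l))
    (f : FreeGroup ℕ) :
    (σ f).toWord = app i p q f.toWord := by
  have h1 : σ f = FreeGroup.mk (app i p q f.toWord) := by
    conv_lhs => rw [← FreeGroup.mk_toWord (x := f)]
    exact sigma_mk_eq_mk_app i p q σ hblk f.toWord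
  obtain ⟨hchain, -⟩ := master i p q hpi hqi hpq f.toWord.length f.toWord le_rfl
    (chain'_toWord f)
  rw [h1, FreeGroup.toWord_mk, chain'_iff_reduce.1 hchain]

end TauAux

/-- If `f` leans right at `n ≥ 1` and `σ` is `τ_i` or `τ_i⁻¹` for some `i ≥ 1` with
`σ ≠ τ_n⁻¹`, then `σ(f)` also leans right at `n`. -/
theorem tau_preserves_leansRight
    (n : ℕ) (hn : 1 ≤ n) (f : FreeGroup ℕ) (hf : LeansRight n f)
    (i : ℕ) (hi : 1 ≤ i) (σ : FreeGroup ℕ →* FreeGroup ℕ)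
    (hσ : σ = tauHom i ∨ σ = tauInvHom i) (hσn : σ ≠ tauInvHom n) :
    LeansRight n (σ f) := by
  obtain ⟨p, q, hpq', hblk⟩ :
      ∃ p q : ℕ, ((p = i+1 ∧ q = i-1) ∨ (p = i-1 ∧ q = i+1 ∧ i ≠ n)) ∧
        ∀ l : ℕ × Bool, σ (FreeGroup.mk [l]) = FreeGroup.mk (TauAux.blk i p q l) := by
    rcases hσ with h | h
    · refine ⟨i+1, i-1, Or.inl ⟨rfl, rfl⟩, ?_⟩
      subst h
      refine TauAux.hblk_gen i (i+1) (i-1) _ ?_ ?_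
      · rw [if_pos rfl, ← TauAux.mk_single_false, ← TauAux.mk_single_true,
          ← TauAux.mk_single_true, FreeGroup.mul_mk, FreeGroup.mul_mk]
        rfl
      · intro j hj
        rw [if_neg hj]
    · refine ⟨i-1, i+1, Or.inr ⟨rfl, rfl, fun hin => hσn (by rw [h, hin])⟩, ?_⟩
      subst h
      refine TauAux.hblk_gen i (i-1) (i+1) _ ?_ ?_
      · rw [if_pos rfl, ← TauAux.mk_single_false, ← TauAux.mk_single_true,
          ← TauAux.mk_single_true, FreeGroup.mul_mk, FreeGroup.mul_mk]
        rfl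
      · intro j hj
        rw [if_neg hj]
  have hpi : p ≠ i := by rcases hpq' with ⟨h1, -⟩ | ⟨h1, -⟩ <;> omega
  have hqi : q ≠ i := by rcases hpq' with ⟨-, h1⟩ | ⟨-, h1, -⟩ <;> omega
  have hpqne : p ≠ q := by rcases hpq' with ⟨h1, h2⟩ | ⟨h1, h2, -⟩ <;> omega
  have hw : (σ f).toWord = TauAux.app i p q f.toWord :=
    TauAux.toWord_image i p q hpi hqi hpqne σ hblk f
  obtain ⟨hchain, hhs⟩ := TauAux.master i p q hpi hqi hpqne f.toWord.length f.toWord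
    le_rfl (TauAux.chain'_toWord f)
  unfold LeansRight at hf ⊢
  rw [hw]
  rcases hf with ⟨m, hm, hhead⟩ | ⟨m, hm, htake⟩
  · obtain ⟨t, hwl⟩ : ∃ t, f.toWord = (m, true) :: t := by
      cases hwl : f.toWord with
      | nil => rw [hwl] at hhead; simp at hhead
      | cons x t =>
        rw [hwl] at hhead
        simp only [List.head?_cons, Option.some.injEq] at hhead
        exact ⟨t, by rw [hhead]⟩
    rw [hwl] at hhs hchain ⊢
    rcases hhs with ⟨h0, -⟩ | ⟨t2, r, ht0, ha0⟩ | ⟨t2, r, ht0, ha0⟩ |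
      ⟨j2, b2, t2, ht0, hj2, ha0⟩ | ⟨t2, r, ht0, ha0⟩ | ⟨t2, r, ht0, ha0⟩
    · simp at h0
    · injection ht0 with h1 h2
      injection h1 with e1 e2
      subst e1
      rw [ha0]
      rcases hpq' with ⟨hp, hq⟩ | ⟨hp, hq, hin⟩
      · exact Or.inl ⟨p, by omega, rfl⟩
      · by_cases hpn : p = n
        · refine Or.inr ⟨m, hm, ?_⟩
          rw [hpn]
          rfl
        · exact Or.inl ⟨p, by omega, rfl⟩
    · injection ht0 with h1 h2
      simp at h1
    · injection ht0 with h1 h2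
      rw [← h1, ← h2] at ha0
      rw [ha0]
      exact Or.inl ⟨m, hm, rfl⟩
    · injection ht0 with h1 h2
      simp at h1
    · injection ht0 with h1 h2
      injection h1 with e1 e2
      rw [ha0]
      refine Or.inl ⟨i, ?_, rfl⟩
      rcases hpq' with ⟨-, hq⟩ | ⟨-, hq, hin⟩ <;> omega
  · obtain ⟨t, hwl⟩ : ∃ t, f.toWord = (n,true) :: (m,false) :: t := by
      cases hwl : f.toWord with
      | nil => rw [hwl] at htake; simp at htake
      | cons x t1 =>
        cases t1 with
        | nil => rw [hwl] at htake; simp at htake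
        | cons y t =>
          rw [hwl] at htake
          simp at htake
          exact ⟨t, by rw [htake.1, htake.2]⟩
    rw [hwl] at hhs hchain ⊢
    have hcht : List.Chain' TauAux.R ((m,false) :: t) := by
      have hc2 := TauAux.chain'_toWord f
      rw [hwl] at hc2
      exact hc2.tail
    obtain ⟨-, hhs0⟩ := TauAux.master i p q hpi hqi hpqne ((m,false)::t).length
      ((m,false)::t) le_rfl hcht
    rcases hhs with ⟨h0, -⟩ | ⟨t2, r, ht0, ha0⟩ | ⟨t2, r, ht0, ha0⟩ |
      ⟨j2, b2, t2, ht0, hj2, ha0⟩ | ⟨t2, r, ht0, ha0⟩ | ⟨t2, r, ht0, ha0⟩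
    · simp at h0
    · injection ht0 with h1 h2
      injection h1 with e1 e2
      rw [ha0]
      rcases hpq' with ⟨hp, -⟩ | ⟨-, -, hin⟩
      · exact Or.inl ⟨p, by omega, rfl⟩
      · exact absurd e1.symm hin
    · injection ht0 with h1 h2
      simp at h1
    · injection ht0 with h1 h2
      rw [← h1, ← h2] at ha0
      rcases hhs0 with ⟨h00, -⟩ | ⟨t3, r3, ht3, ha3⟩ | ⟨t3, r3, ht3, ha3⟩ |
        ⟨j3, b3, t3, ht3, hj3, ha3⟩ | ⟨t3, r3, ht3, ha3⟩ | ⟨t3, r3, ht3, ha3⟩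
      · simp at h00
      · injection ht3 with g1 g2
        simp at g1
      · injection ht3 with g1 g2
        injection g1 with e1 e2
        rw [ha3] at ha0
        rw [ha0] at hchain ⊢
        have hnq : n ≠ q := by
          intro hnq
          exact (List.isChain_cons_cons.1 hchain).1 ⟨hnq, rfl⟩
        refine Or.inr ⟨q, ?_, rfl⟩
        rcases hpq' with ⟨-, hq⟩ | ⟨-, hq, -⟩ <;> omega
      · injection ht3 with g1 g2
        rw [← g1, ← g2] at ha3
        rw [ha3] at ha0
        rw [ha0]
        exact Or.inr ⟨m, hm, rfl⟩
      · injection ht3 with g1 g2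
        injection g1 with e1 e2
        rw [ha3] at ha0
        rw [ha0] at hchain ⊢
        have hni : n ≠ i := by
          intro hni
          exact (List.isChain_cons_cons.1 hchain).1 ⟨hni, rfl⟩
        refine Or.inr ⟨i, ?_, rfl⟩
        rcases hpq' with ⟨hp, -⟩ | ⟨hp, -, -⟩ <;> omega
      · injection ht3 with g1 g2
        simp at g1
    · injection ht0 with h1 h2
      simp at h1
    · injection ht0 with h1 h2
      injection h1 with e1 e2
      injection h2 with h3 h4
      injection h3 with e3 e4
      rw [ha0]
      refine Or.inl ⟨i, ?_, rfl⟩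
      rcases hpq' with ⟨-, hq⟩ | ⟨-, hq, -⟩ <;> omega
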